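/- For all functions b, β that are finite linear combinations of Haar functions, all J ∈ 𝒟, and σ independent uniform ±1 random signs, E ‖M_b T_σ M_β h¹_J‖_2² ≥ |J|^{−1} Σ_{I∈𝒟, I⊆J} (⟨β,h_I⟩²/|I|) ∫_I b² dx; consequently the averaged operator norm ‖M_b T_σ M_β‖_{E,2→2}² dominates sup_{J∈𝒟} |J|^{−1} Σ_{I⊆J} (⟨β,h_I⟩²/|I|) ∫_I b² dx. -/

import Mathlib

open MeasureTheory ProbabilityTheory Real Filter
open scoped ENNReal

attribute [local instance] Classical.propDecidable

noncomputable section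

namespace RandomParaproducts

/-- Dyadic intervals: `(n, k)` represents `[k·2ⁿ, (k+1)·2ⁿ)`. -/
abbrev D : Type := ℤ × ℤ

/-- The length `2ⁿ` of the dyadic interval `(n, k)`. -/
def len (I : D) : ℝ := (2 : ℝ) ^ I.1

/-- The dyadic interval `[k·2ⁿ, (k+1)·2ⁿ)` as a subset of `ℝ`. -/
def ival (I : D) : Set ℝ := Set.Ico ((I.2 : ℝ) * (2 : ℝ) ^ I.1) (((I.2 : ℝ) + 1) * (2 : ℝ) ^ I.1)

/-- The left half of a dyadic interval. -/
def lc (I : D) : D := (I.1 - 1, 2 * I.2)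

/-- The right half of a dyadic interval. -/
def rc (I : D) : D := (I.1 - 1, 2 * I.2 + 1)

/-- The `L²`-normalized Haar function `h_I = h⁰_I`. -/
def haar (I : D) : ℝ → ℝ := fun x =>
  (Real.sqrt (len I))⁻¹ *
    ((ival (rc I)).indicator (fun _ => (1 : ℝ)) x - (ival (lc I)).indicator (fun _ => (1 : ℝ)) x)

/-- The function `h¹_I = |h_I| = |I|^{-1/2} 1_I`. -/
def haar1 (I : D) : ℝ → ℝ := fun x =>
  (Real.sqrt (len I))⁻¹ * (ival I).indicator (fun _ => (1 : ℝ)) x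

/-- `h^ε_I`, where `false` codes the exponent `0` and `true` codes the exponent `1`. -/
def hfun : Bool → D → ℝ → ℝ
  | false => haar
  | true => haar1

/-- The inner product `⟨f, g⟩ = ∫ f g` on `L²(ℝ)`. -/
def ip (f g : ℝ → ℝ) : ℝ := ∫ x, f x * g x

/-- The paraproduct `P^{ε,δ}_b f = ∑_I b_I ⟨f, h^δ_I⟩ h^ε_I` with finitely supported
numerical symbol `b`. -/
def P (e d : Bool) (b : D →₀ ℝ) (f : ℝ → ℝ) : ℝ → ℝ := fun x =>
  ∑ I ∈ b.support, b I * ip f (hfun d I) * hfun e I x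

/-- The signed paraproduct `P^{σ,ε,δ}_b f = ∑_I σ_I b_I ⟨f, h^δ_I⟩ h^ε_I`. -/
def Psig (σ : D → ℝ) (e d : Bool) (b : D →₀ ℝ) (f : ℝ → ℝ) : ℝ → ℝ := fun x =>
  ∑ I ∈ b.support, σ I * (b I * ip f (hfun d I) * hfun e I x)

/-- The square of the `L²(ℝ)` norm, `‖g‖₂² = ∫ g²`. -/
def l2normSq (g : ℝ → ℝ) : ℝ := ∫ x, (g x) ^ 2

/-- The Carleson norm of a sequence `a` whose nonzero entries lie in the finite set `s`:
`sup_J (|J|⁻¹ ∑_{I ⊆ J} a_I² |I|)^{1/2}`. -/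
def carlOn (s : Finset D) (a : D → ℝ) : ℝ :=
  ⨆ J : D, Real.sqrt ((len J)⁻¹ *
    ∑ I ∈ s.filter (fun I => ival I ⊆ ival J), (a I) ^ 2 * len I)

/-- `μ` is the law of independent uniformly distributed random signs `{σ_I : I ∈ 𝒟}`. -/
def IsSignMeasure (μ : Measure (D → ℝ)) : Prop :=
  IsProbabilityMeasure μ ∧
    iIndepFun (fun I σ => σ I) μ ∧
    ∀ I : D, μ.map (fun σ => σ I) =
      (2⁻¹ : ℝ≥0∞) • (Measure.dirac (1 : ℝ) + Measure.dirac (-1 : ℝ))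

/-- `f` is a unit vector of `L²(ℝ)`. -/
def UnitL2 (f : ℝ → ℝ) : Prop := MemLp f 2 volume ∧ eLpNorm f 2 volume = 1

/-- The operator norm on `L²(ℝ)` of a map defined on functions. -/
def opNorm (T : (ℝ → ℝ) → ℝ → ℝ) : ℝ :=
  ⨆ f : {f : ℝ → ℝ // UnitL2 f}, Real.sqrt (l2normSq (T f.1))

/-- The averaged operator norm `sup_{‖f‖₂ = 1} (𝔼 ‖T_σ f‖₂²)^{1/2}`. -/
def avgOpNorm (μ : Measure (D → ℝ)) (T : (D → ℝ) → (ℝ → ℝ) → ℝ → ℝ) : ℝ :=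
  ⨆ f : {f : ℝ → ℝ // UnitL2 f}, Real.sqrt (∫ σ, l2normSq (T σ f.1) ∂μ)

/-- `b` is the finite linear combination of Haar functions with coefficients `c`. -/
def FinHaar (b : ℝ → ℝ) (c : D →₀ ℝ) : Prop :=
  b = fun x => ∑ I ∈ c.support, c I * haar I x

/-- The paraproduct `P^{ε,γ}_{b,α} f = ∑_{I} (⟨b, h^α_I⟩/|I|^{1/2}) ⟨f, h^γ_I⟩ h^ε_I` with
function symbol `b`, the sum extended over a finite set `s` containing all the
nonvanishing terms. -/
def Pb (s : Finset D) (e g a : Bool) (b : ℝ → ℝ) (f : ℝ → ℝ) : ℝ → ℝ := fun x =>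
  ∑ I ∈ s, (ip b (hfun a I) / Real.sqrt (len I)) * ip f (hfun g I) * hfun e I x

lemma measurableSet_ival (I : D) : MeasurableSet (ival I) := measurableSet_Ico

lemma volume_ival_ne_top (I : D) : volume (ival I) ≠ ⊤ := by
  simp only [ival, Real.volume_Ico]; exact ENNReal.ofReal_ne_top

lemma memℒp_haar (I : D) : MemLp (haar I) 2 volume := by
  have h1 : MemLp ((ival (rc I)).indicator (fun _ => (1 : ℝ))) 2 volume :=
    memLp_indicator_const 2 (measurableSet_ival _) 1 (Or.inr (volume_ival_ne_top _))
  have h2 : MemLp ((ival (lc I)).indicator (fun _ => (1 : ℝ))) 2 volume :=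
    memLp_indicator_const 2 (measurableSet_ival _) 1 (Or.inr (volume_ival_ne_top _))
  exact ((h1.sub h2).const_mul ((Real.sqrt (len I))⁻¹))

/-- The Haar function `h_I` as an element of `L²(ℝ)`. -/
def haarLp (I : D) : Lp ℝ 2 (volume : Measure ℝ) := (memℒp_haar I).toLp (haar I)

/-- The random Haar multiplier `T_σ f = ∑_{I ∈ 𝒟} σ_I ⟨f, h_I⟩ h_I`, as an element of
`L²(ℝ)`; the (infinite) sum converges unconditionally in `L²`. -/
def Tfull (σ : D → ℝ) (g : ℝ → ℝ) : Lp ℝ 2 (volume : Measure ℝ) :=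
  ∑' I : D, (σ I * ip g (haar I)) • haarLp I

/-- The composition `M_b T_σ M_β` applied to `f`, as a function. -/
def MbTM (σ : D → ℝ) (b β f : ℝ → ℝ) : ℝ → ℝ := fun x =>
  b x * (Tfull σ fun y => β y * f y) x


/-! ### Basic facts -/

lemma len_pos (I : D) : 0 < len I := zpow_pos two_pos _

lemma len_ne_zero (I : D) : len I ≠ 0 := (len_pos I).ne'

lemma sqrt_len_pos (I : D) : 0 < Real.sqrt (len I) := Real.sqrt_pos.mpr (len_pos I)

lemma sq_sqrt_len (I : D) : Real.sqrt (len I) * Real.sqrt (len I) = len I :=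
  Real.mul_self_sqrt (len_pos I).le

lemma len_lc (I : D) : len (lc I) = len I / 2 := by
  simp only [len, lc, zpow_sub₀ (two_ne_zero (α := ℝ))]
  ring

lemma len_rc (I : D) : len (rc I) = len I / 2 := by
  simp only [len, rc, zpow_sub₀ (two_ne_zero (α := ℝ))]
  ring

lemma volume_ival (I : D) : volume (ival I) = ENNReal.ofReal (len I) := by
  rw [ival, Real.volume_Ico]
  congr 1
  rw [len]; ring

lemma volume_real_ival (I : D) : (volume (ival I)).toReal = len I := by
  rw [volume_ival, ENNReal.toReal_ofReal (len_pos I).le]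

/-- The two halves of a dyadic interval are disjoint and their union is the interval. -/
lemma ival_union (I : D) : ival (lc I) ∪ ival (rc I) = ival I := by
  have h2 : ((2:ℝ)) ^ (I.1 - 1) * 2 = (2:ℝ) ^ I.1 := by
    rw [zpow_sub₀ (two_ne_zero (α := ℝ))]; ring
  have e1 : ((2 * I.2 : ℤ) : ℝ) * (2:ℝ) ^ (I.1 - 1) = (I.2 : ℝ) * (2:ℝ) ^ I.1 := by
    push_cast; rw [← h2]; ring
  have e2 : (((2 * I.2 : ℤ) : ℝ) + 1 + 1) * (2:ℝ) ^ (I.1 - 1)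
      = ((I.2 : ℝ) + 1) * (2:ℝ) ^ I.1 := by
    push_cast; rw [← h2]; ring
  have e3 : (((2 * I.2 + 1 : ℤ)) : ℝ) = ((2 * I.2 : ℤ) : ℝ) + 1 := by push_cast; ring
  simp only [ival, lc, rc, e3]
  rw [Set.Ico_union_Ico_eq_Ico, e1, e2]
  · have : (0:ℝ) < (2:ℝ) ^ (I.1 - 1) := zpow_pos two_pos _
    nlinarith
  · have : (0:ℝ) < (2:ℝ) ^ (I.1 - 1) := zpow_pos two_pos _
    nlinarith

/-- Same-scale dyadic intervals with different positions are disjoint. -/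
lemma ival_disj_same_scale {I K : D} (h1 : I.1 = K.1) (h2 : I.2 ≠ K.2) {x : ℝ}
    (hx : x ∈ ival I) : x ∉ ival K := by
  intro hx'
  rcases hx with ⟨ha, hb⟩
  rcases hx' with ⟨hc, hd⟩
  rw [h1] at ha hb
  have hp : (0:ℝ) < (2:ℝ) ^ K.1 := zpow_pos two_pos _
  rcases lt_or_gt_of_ne h2 with h | h
  · have : (I.2 : ℝ) + 1 ≤ (K.2 : ℝ) := by exact_mod_cast Int.add_one_le_of_lt h
    nlinarith
  · have : (K.2 : ℝ) + 1 ≤ (I.2 : ℝ) := by exact_mod_cast Int.add_one_le_of_lt h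
    nlinarith

lemma ival_lc_subset (I : D) : ival (lc I) ⊆ ival I :=
  (ival_union I) ▸ Set.subset_union_left

lemma ival_rc_subset (I : D) : ival (rc I) ⊆ ival I :=
  (ival_union I) ▸ Set.subset_union_right

lemma lc_rc_disj (I : D) {x : ℝ} (hx : x ∈ ival (lc I)) : x ∉ ival (rc I) :=
  ival_disj_same_scale (I := lc I) (K := rc I) rfl (show (2*I.2 : ℤ) ≠ 2*I.2+1 by omega) hx

/-- Dyadic trichotomy: a smaller-scale interval is contained in, or disjoint from,
a larger-scale one. -/
lemma ival_subset_or_disj {I K : D} (h : I.1 ≤ K.1) :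
    ival I ⊆ ival K ∨ ∀ x ∈ ival I, x ∉ ival K := by
  obtain ⟨m, k⟩ := I
  obtain ⟨p, q⟩ := K
  simp only at h ⊢
  set t : ℕ := (p - m).toNat with ht
  set N : ℤ := 2 ^ t with hN
  have hNpos : (0:ℤ) < N := pow_pos two_pos _
  have hNr : (N : ℝ) * (2:ℝ) ^ m = (2:ℝ) ^ p := by
    have : (N : ℝ) = (2:ℝ) ^ (t : ℤ) := by push_cast [hN]; norm_num
    rw [this, ← zpow_add₀ (two_ne_zero (α := ℝ))]
    congr 1
    omega
  have h2m : (0:ℝ) < (2:ℝ) ^ m := zpow_pos two_pos _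
  rcases lt_or_ge k (q * N) with hk | hk
  · right
    intro x hx hx'
    have h1 : (k:ℝ) + 1 ≤ (q:ℝ) * N := by exact_mod_cast Int.add_one_le_of_lt hk
    rcases hx with ⟨_, hb⟩
    rcases hx' with ⟨hc, _⟩
    have hq : (q:ℝ) * 2 ^ p = (q:ℝ) * N * 2 ^ m := by rw [mul_assoc, hNr]
    nlinarith [hb, hc]
  rcases lt_or_ge k ((q + 1) * N) with hk2 | hk2
  · left
    intro x hx
    rcases hx with ⟨ha, hb⟩
    constructor
    · have h1 : (q:ℝ) * N ≤ (k:ℝ) := by exact_mod_cast hk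
      calc (q:ℝ) * 2 ^ p = (q:ℝ) * N * 2 ^ m := by rw [mul_assoc, hNr]
        _ ≤ (k:ℝ) * 2 ^ m := by nlinarith
        _ ≤ x := ha
    · have h1 : (k:ℝ) + 1 ≤ ((q:ℝ) + 1) * N := by
        have : k + 1 ≤ (q + 1) * N := Int.add_one_le_of_lt hk2
        exact_mod_cast this
      calc x < ((k:ℝ) + 1) * 2 ^ m := hb
        _ ≤ ((q:ℝ) + 1) * N * 2 ^ m := by nlinarith
        _ = ((q:ℝ) + 1) * 2 ^ p := by rw [mul_assoc, hNr]
  · right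
    intro x hx hx'
    rcases hx with ⟨ha, _⟩
    rcases hx' with ⟨_, hd⟩
    have h1 : ((q:ℝ) + 1) * N ≤ (k:ℝ) := by exact_mod_cast hk2
    have : ((q:ℝ) + 1) * 2 ^ p ≤ x := by
      calc ((q:ℝ) + 1) * 2 ^ p = ((q:ℝ) + 1) * N * 2 ^ m := by rw [mul_assoc, hNr]
        _ ≤ (k:ℝ) * 2 ^ m := by nlinarith
        _ ≤ x := ha
    linarith


/-! ### Pointwise facts about Haar functions -/

lemma haar_eq_zero {I : D} {x : ℝ} (hx : x ∉ ival I) : haar I x = 0 := by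
  have h1 : x ∉ ival (lc I) := fun h => hx (ival_lc_subset I h)
  have h2 : x ∉ ival (rc I) := fun h => hx (ival_rc_subset I h)
  simp [haar, Set.indicator_of_notMem h1, Set.indicator_of_notMem h2]

lemma haar_on_lc {I : D} {x : ℝ} (hx : x ∈ ival (lc I)) :
    haar I x = -(Real.sqrt (len I))⁻¹ := by
  have h2 : x ∉ ival (rc I) := lc_rc_disj I hx
  simp [haar, Set.indicator_of_mem hx, Set.indicator_of_notMem h2]

lemma haar_on_rc {I : D} {x : ℝ} (hx : x ∈ ival (rc I)) :
    haar I x = (Real.sqrt (len I))⁻¹ := by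
  have h1 : x ∉ ival (lc I) := fun h => lc_rc_disj I h hx
  simp [haar, Set.indicator_of_mem hx, Set.indicator_of_notMem h1]

lemma haar_sq (I : D) (x : ℝ) :
    haar I x * haar I x = (len I)⁻¹ * (ival I).indicator (fun _ => (1:ℝ)) x := by
  by_cases hx : x ∈ ival I
  · have hsq : (Real.sqrt (len I))⁻¹ * (Real.sqrt (len I))⁻¹ = (len I)⁻¹ := by
      rw [← mul_inv, sq_sqrt_len]
    rw [Set.indicator_of_mem hx]
    rw [← ival_union I] at hx
    rcases hx with h | h
    · rw [haar_on_lc h]; rw [← hsq]; ring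
    · rw [haar_on_rc h]; rw [← hsq]; ring
  · rw [haar_eq_zero hx, Set.indicator_of_notMem hx]; ring

lemma haar_abs_le (I : D) (x : ℝ) : |haar I x| ≤ (Real.sqrt (len I))⁻¹ := by
  by_cases hx : x ∈ ival I
  · rw [← ival_union I] at hx
    rcases hx with h | h
    · rw [haar_on_lc h, abs_neg, abs_of_nonneg (by positivity)]
    · rw [haar_on_rc h, abs_of_nonneg (by positivity)]
  · rw [haar_eq_zero hx, abs_zero]; positivity

lemma haar1_sq (I : D) (x : ℝ) :
    haar1 I x * haar1 I x = (len I)⁻¹ * (ival I).indicator (fun _ => (1:ℝ)) x := by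
  by_cases hx : x ∈ ival I
  · simp only [haar1, Set.indicator_of_mem hx]
    rw [show ((Real.sqrt (len I))⁻¹ * 1) * ((Real.sqrt (len I))⁻¹ * 1)
        = (Real.sqrt (len I))⁻¹ * (Real.sqrt (len I))⁻¹ by ring, ← mul_inv, sq_sqrt_len]
    ring
  · simp [haar1, Set.indicator_of_notMem hx]

lemma stronglyMeasurable_ind (I : D) :
    StronglyMeasurable ((ival I).indicator (fun _ => (1:ℝ))) :=
  (stronglyMeasurable_const).indicator (measurableSet_ival I)

lemma stronglyMeasurable_haar (I : D) : StronglyMeasurable (haar I) :=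
  (stronglyMeasurable_const.mul
    ((stronglyMeasurable_ind (rc I)).sub (stronglyMeasurable_ind (lc I))))

lemma stronglyMeasurable_haar1 (I : D) : StronglyMeasurable (haar1 I) :=
  (stronglyMeasurable_const.mul (stronglyMeasurable_ind I))

lemma integrable_ind (I : D) :
    Integrable ((ival I).indicator (fun _ => (1:ℝ))) volume := by
  rw [integrable_indicator_iff (measurableSet_ival I)]
  exact integrableOn_const (volume_ival_ne_top I)

lemma integral_ind (I : D) :
    ∫ x, (ival I).indicator (fun _ => (1:ℝ)) x = len I := by
  rw [integral_indicator (measurableSet_ival I)]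
  simp [measureReal_def, volume_real_ival I]

lemma integrable_haar (I : D) : Integrable (haar I) volume :=
  (((integrable_ind (rc I)).sub (integrable_ind (lc I))).const_mul _)

lemma integral_haar (I : D) : ∫ x, haar I x = 0 := by
  simp only [haar]
  rw [integral_const_mul, integral_sub (integrable_ind (rc I)) (integrable_ind (lc I)),
    integral_ind, integral_ind, len_lc, len_rc]
  ring

lemma ip_symm (f g : ℝ → ℝ) : ip f g = ip g f := by
  simp only [ip, mul_comm]

lemma ip_haar_self (I : D) : ip (haar I) (haar I) = 1 := by
  simp only [ip, haar_sq]
  rw [integral_const_mul, integral_ind, inv_mul_cancel₀ (len_ne_zero I)]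

lemma ip_haar_orth_aux {I K : D} (h : I ≠ K) (hle : I.1 ≤ K.1) :
    ip (haar I) (haar K) = 0 := by
  rcases eq_or_lt_of_le hle with heq | hlt
  · -- same scale, different position
    have h2 : I.2 ≠ K.2 := fun h2 => h (Prod.ext heq h2)
    have hz : ∀ x, haar I x * haar K x = 0 := by
      intro x
      by_cases hx : x ∈ ival I
      · rw [haar_eq_zero (ival_disj_same_scale heq h2 hx), mul_zero]
      · rw [haar_eq_zero hx, zero_mul]
    simp only [ip, hz, integral_zero]
  · -- strictly smaller scale
    have hle' : I.1 ≤ (lc K).1 := by simp only [lc]; omega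
    have hle'' : I.1 ≤ (rc K).1 := by simp only [rc]; omega
    rcases ival_subset_or_disj (K := lc K) hle' with hsub | hdisj
    · have hz : ∀ x, haar I x * haar K x = -(Real.sqrt (len K))⁻¹ * haar I x := by
        intro x
        by_cases hx : x ∈ ival I
        · rw [haar_on_lc (hsub hx)]; ring
        · rw [haar_eq_zero hx]; ring
      simp only [ip, hz]
      rw [integral_const_mul, integral_haar, mul_zero]
    rcases ival_subset_or_disj (K := rc K) hle'' with hsub | hdisj'
    · have hz : ∀ x, haar I x * haar K x = (Real.sqrt (len K))⁻¹ * haar I x := by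
        intro x
        by_cases hx : x ∈ ival I
        · rw [haar_on_rc (hsub hx)]; ring
        · rw [haar_eq_zero hx]; ring
      simp only [ip, hz]
      rw [integral_const_mul, integral_haar, mul_zero]
    · have hz : ∀ x, haar I x * haar K x = 0 := by
        intro x
        by_cases hx : x ∈ ival I
        · have : x ∉ ival K := by
            rw [← ival_union K]
            rintro (hc | hc)
            exacts [hdisj x hx hc, hdisj' x hx hc]
          rw [haar_eq_zero this, mul_zero]
        · rw [haar_eq_zero hx, zero_mul]
      simp only [ip, hz, integral_zero]

lemma ip_haar_orth {I K : D} (h : I ≠ K) : ip (haar I) (haar K) = 0 := by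
  rcases le_total I.1 K.1 with hle | hle
  · exact ip_haar_orth_aux h hle
  · rw [ip_symm]; exact ip_haar_orth_aux (Ne.symm h) hle


/-! ### The Haar system in `L²` -/

lemma memℒp_haar1 (I : D) : MemLp (haar1 I) 2 volume :=
  ((memLp_indicator_const 2 (measurableSet_ival I) 1 (Or.inr (volume_ival_ne_top I))).const_mul
    ((Real.sqrt (len I))⁻¹))

lemma ip_eq_inner {f g : ℝ → ℝ} (hf : MemLp f 2 volume) (hg : MemLp g 2 volume) :
    (inner ℝ (hf.toLp f) (hg.toLp g) : ℝ) = ip f g := by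
  rw [L2.inner_def, ip]
  refine integral_congr_ae ?_
  filter_upwards [hf.coeFn_toLp, hg.coeFn_toLp] with a h1 h2
  rw [h1, h2, RCLike.inner_apply, conj_trivial]
  ring

lemma orthonormal_haarLp : Orthonormal ℝ haarLp := by
  rw [orthonormal_iff_ite]
  intro i j
  rw [show haarLp i = (memℒp_haar i).toLp (haar i) from rfl,
    show haarLp j = (memℒp_haar j).toLp (haar j) from rfl,
    ip_eq_inner (memℒp_haar i) (memℒp_haar j)]
  by_cases h : i = j
  · subst h; simp [ip_haar_self]
  · simp [h, ip_haar_orth h]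

lemma ip_haar1_self (I : D) : ip (haar1 I) (haar1 I) = 1 := by
  simp only [ip, haar1_sq]
  rw [integral_const_mul, integral_ind, inv_mul_cancel₀ (len_ne_zero I)]

lemma norm_toLp_haar1 (I : D) : ‖(memℒp_haar1 I).toLp (haar1 I)‖ = 1 := by
  have h := ip_eq_inner (memℒp_haar1 I) (memℒp_haar1 I)
  rw [ip_haar1_self, real_inner_self_eq_norm_sq] at h
  nlinarith [norm_nonneg ((memℒp_haar1 I).toLp (haar1 I))]

lemma unitL2_haar1 (I : D) : UnitL2 (haar1 I) := by
  refine ⟨memℒp_haar1 I, ?_⟩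
  have h := norm_toLp_haar1 I
  rw [Lp.norm_toLp] at h
  have hne : eLpNorm (haar1 I) 2 volume ≠ ⊤ := (memℒp_haar1 I).2.ne
  rw [← ENNReal.ofReal_toReal hne, h]
  simp


/-! ### Bounded multipliers on `L²` -/

section Multiplier

variable {bb : ℝ → ℝ} {K : ℝ}

lemma memℒp_bdd_mul (hm : StronglyMeasurable bb) (hK : ∀ x, |bb x| ≤ K)
    {f : ℝ → ℝ} (hf : MemLp f 2 volume) : MemLp (fun x => bb x * f x) 2 volume := by
  refine MemLp.of_le_mul (c := K) hf (hm.aestronglyMeasurable.mul hf.aestronglyMeasurable) ?_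
  filter_upwards with x
  rw [norm_mul]
  exact mul_le_mul_of_nonneg_right ((Real.norm_eq_abs _) ▸ hK x) (norm_nonneg _)

lemma eLpNorm_bdd_mul (hK : ∀ x, |bb x| ≤ K) (f : ℝ → ℝ) :
    eLpNorm (fun x => bb x * f x) 2 volume ≤ ENNReal.ofReal K * eLpNorm f 2 volume := by
  refine eLpNorm_le_mul_eLpNorm_of_ae_le_mul ?_ 2
  filter_upwards with x
  rw [norm_mul]
  exact mul_le_mul_of_nonneg_right ((Real.norm_eq_abs _) ▸ hK x) (norm_nonneg _)

/-- Multiplication by a bounded measurable function, as a map of `L²`. -/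
def mulLp (hm : StronglyMeasurable bb) (hK : ∀ x, |bb x| ≤ K) (G : Lp ℝ 2 (volume : Measure ℝ)) :
    Lp ℝ 2 (volume : Measure ℝ) :=
  (memℒp_bdd_mul hm hK (Lp.memLp G)).toLp (fun x => bb x * G x)

lemma coeFn_mulLp (hm : StronglyMeasurable bb) (hK : ∀ x, |bb x| ≤ K) (G : Lp ℝ 2 (volume : Measure ℝ)) :
    mulLp hm hK G =ᵐ[volume] fun x => bb x * G x :=
  MemLp.coeFn_toLp _

lemma norm_mulLp_le (hm : StronglyMeasurable bb) (hK : ∀ x, |bb x| ≤ K) (G : Lp ℝ 2 (volume : Measure ℝ)) :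
    ‖mulLp hm hK G‖ ≤ K * ‖G‖ := by
  rw [mulLp, Lp.norm_toLp]
  have h := eLpNorm_bdd_mul hK (G : ℝ → ℝ)
  have hG : eLpNorm (G : ℝ → ℝ) 2 volume = ENNReal.ofReal ‖G‖ := by
    rw [Lp.norm_def, ENNReal.ofReal_toReal (Lp.eLpNorm_ne_top G)]
  have hK0 : 0 ≤ K := (abs_nonneg _).trans (hK 0)
  calc (eLpNorm (fun x => bb x * G x) 2 volume).toReal
      ≤ (ENNReal.ofReal K * ENNReal.ofReal ‖G‖).toReal := by
        refine ENNReal.toReal_mono ?_ (hG ▸ h)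
        exact ENNReal.mul_ne_top ENNReal.ofReal_ne_top ENNReal.ofReal_ne_top
    _ = K * ‖G‖ := by
        rw [ENNReal.toReal_mul, ENNReal.toReal_ofReal hK0,
          ENNReal.toReal_ofReal (norm_nonneg _)]

lemma mulLp_add (hm : StronglyMeasurable bb) (hK : ∀ x, |bb x| ≤ K) (G G' : Lp ℝ 2 (volume : Measure ℝ)) :
    mulLp hm hK (G + G') = mulLp hm hK G + mulLp hm hK G' := by
  refine Lp.ext ?_
  filter_upwards [coeFn_mulLp hm hK (G + G'), coeFn_mulLp hm hK G, coeFn_mulLp hm hK G',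
    Lp.coeFn_add G G', Lp.coeFn_add (mulLp hm hK G) (mulLp hm hK G')] with x h1 h2 h3 h4 h5
  rw [h5, h1, h4]
  simp [Pi.add_apply, h2, h3, mul_add]

lemma mulLp_smul (hm : StronglyMeasurable bb) (hK : ∀ x, |bb x| ≤ K) (r : ℝ)
    (G : Lp ℝ 2 (volume : Measure ℝ)) : mulLp hm hK (r • G) = r • mulLp hm hK G := by
  refine Lp.ext ?_
  filter_upwards [coeFn_mulLp hm hK (r • G), coeFn_mulLp hm hK G,
    Lp.coeFn_smul r G, Lp.coeFn_smul r (mulLp hm hK G)] with x h1 h2 h3 h4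
  rw [h4, h1, Pi.smul_apply, h3, Pi.smul_apply, h2]
  simp [smul_eq_mul]; ring

/-- Multiplication by a bounded measurable function, as a continuous linear map of `L²`. -/
def mulCLM (hm : StronglyMeasurable bb) (hK : ∀ x, |bb x| ≤ K) :
    Lp ℝ 2 (volume : Measure ℝ) →L[ℝ] Lp ℝ 2 (volume : Measure ℝ) :=
  LinearMap.mkContinuous
    { toFun := mulLp hm hK
      map_add' := mulLp_add hm hK
      map_smul' := mulLp_smul hm hK } K (norm_mulLp_le hm hK)

lemma coeFn_mulCLM (hm : StronglyMeasurable bb) (hK : ∀ x, |bb x| ≤ K) (G : Lp ℝ 2 (volume : Measure ℝ)) :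
    mulCLM hm hK G =ᵐ[volume] fun x => bb x * G x :=
  coeFn_mulLp hm hK G

lemma norm_mulCLM_le (hm : StronglyMeasurable bb) (hK : ∀ x, |bb x| ≤ K) (G : Lp ℝ 2 (volume : Measure ℝ)) :
    ‖mulCLM hm hK G‖ ≤ K * ‖G‖ :=
  norm_mulLp_le hm hK G

end Multiplier


/-! ### Random signs -/

lemma integrable_dirac' {f : ℝ → ℝ} (hf : StronglyMeasurable f) (a : ℝ) :
    Integrable f (Measure.dirac a) := by
  refine ⟨hf.aestronglyMeasurable, ?_⟩
  show (∫⁻ x, ‖f x‖₊ ∂Measure.dirac a) < ⊤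
  rw [lintegral_dirac]
  exact ENNReal.coe_lt_top

lemma integral_std_sign {f : ℝ → ℝ} (hf : StronglyMeasurable f) :
    ∫ x, f x ∂((2⁻¹ : ℝ≥0∞) • (Measure.dirac (1 : ℝ) + Measure.dirac (-1 : ℝ)))
      = 2⁻¹ * (f 1 + f (-1)) := by
  rw [integral_smul_measure, integral_add_measure (integrable_dirac' hf 1)
    (integrable_dirac' hf (-1)), integral_dirac, integral_dirac]
  simp [ENNReal.toReal_inv]

section Sign

variable {μ : Measure (D → ℝ)}

lemma sign_ae (hμ : IsSignMeasure μ) : ∀ᵐ σ ∂μ, ∀ I : D, σ I = 1 ∨ σ I = -1 := by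
  rw [ae_all_iff]
  intro I
  have hs : MeasurableSet ({1, -1}ᶜ : Set ℝ) :=
    ((Set.finite_singleton (-1)).insert 1).measurableSet.compl
  have hmap : μ.map (fun σ => σ I) ({1, -1}ᶜ : Set ℝ) = 0 := by
    rw [hμ.2.2 I]
    simp [Measure.dirac_apply' _ hs, Set.indicator_of_notMem, Set.mem_compl_iff]
  rw [Measure.map_apply (measurable_pi_apply I) hs] at hmap
  refine measure_mono_null ?_ hmap
  intro σ hσ
  simp only [Set.mem_setOf_eq, Set.mem_preimage, Set.mem_compl_iff, Set.mem_insert_iff,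
    Set.mem_singleton_iff]
  tauto

lemma integrable_eval_mul (hμ : IsSignMeasure μ) (I K : D) : Integrable (fun σ => σ I * σ K) μ := by
  haveI := hμ.1
  refine memLp_one_iff_integrable.mp ?_
  refine MemLp.of_bound (((measurable_pi_apply I).mul (measurable_pi_apply K)).aestronglyMeasurable) 1 ?_
  filter_upwards [sign_ae hμ] with σ hσ
  rcases hσ I with h1 | h1 <;> rcases hσ K with h2 | h2 <;> simp [h1, h2]

lemma integrable_eval (hμ : IsSignMeasure μ) (I : D) : Integrable (fun σ => σ I) μ := by
  haveI := hμ.1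
  refine memLp_one_iff_integrable.mp ?_
  refine MemLp.of_bound ((measurable_pi_apply I).aestronglyMeasurable) 1 ?_
  filter_upwards [sign_ae hμ] with σ hσ
  rcases hσ I with h1 | h1 <;> simp [h1]

lemma integral_eval (hμ : IsSignMeasure μ) (I : D) : ∫ σ, σ I ∂μ = 0 := by
  have h := integral_map (μ := μ) (measurable_pi_apply I).aemeasurable
    (f := fun x : ℝ => x) measurable_id.aestronglyMeasurable
  rw [← h, hμ.2.2 I,
    integral_std_sign (f := fun x : ℝ => x) measurable_id.stronglyMeasurable]
  norm_num

lemma integral_eval_mul (hμ : IsSignMeasure μ) (I K : D) :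
    ∫ σ, σ I * σ K ∂μ = if I = K then 1 else 0 := by
  by_cases h : I = K
  · subst h
    have h2 := integral_map (μ := μ) (measurable_pi_apply I).aemeasurable
      (f := fun x : ℝ => x * x) (measurable_id.mul measurable_id).aestronglyMeasurable
    rw [if_pos rfl, ← h2, hμ.2.2 I,
      integral_std_sign (f := fun x : ℝ => x * x)
        (measurable_id.mul measurable_id).stronglyMeasurable]
    norm_num
  · rw [if_neg h]
    have hind : IndepFun (fun σ => σ I) (fun σ => σ K) μ := hμ.2.1.indepFun h
    have hx := hind.integral_mul_eq_mul_integral (integrable_eval hμ I).aestronglyMeasurable (integrable_eval hμ K).aestronglyMeasurable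
    exact hx.trans (by rw [integral_eval hμ I, zero_mul])

end Sign


/-! ### The random Haar multiplier as a convergent sum -/

/-- A fixed enumeration of the dyadic intervals. -/
def enum : ℕ ≃ D := (Denumerable.eqv D).symm

lemma ip_eq_inner' {g : ℝ → ℝ} (hg : MemLp g 2 volume) (I : D) :
    ip g (haar I) = (inner ℝ (hg.toLp g) (haarLp I) : ℝ) :=
  (ip_eq_inner hg (memℒp_haar I)).symm

lemma norm_sum_haarLp (s : Finset D) (l : D → ℝ) :
    ‖∑ I ∈ s, l I • haarLp I‖ ^ 2 = ∑ I ∈ s, l I ^ 2 := by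
  have h := orthonormal_haarLp.inner_sum l l s
  rw [← real_inner_self_eq_norm_sq]
  rw [h]
  simp [sq]

lemma sum_coeff_sq_le {g : ℝ → ℝ} (hg : MemLp g 2 volume) (s : Finset D) :
    ∑ I ∈ s, (ip g (haar I)) ^ 2 ≤ ‖hg.toLp g‖ ^ 2 := by
  have h := orthonormal_haarLp.sum_inner_products_le (hg.toLp g) (s := s)
  refine le_trans (le_of_eq ?_) h
  refine Finset.sum_congr rfl fun I _ => ?_
  rw [ip_eq_inner' hg I, real_inner_comm]
  rw [Real.norm_eq_abs, sq_abs]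

lemma summable_coeff_sq {g : ℝ → ℝ} (hg : MemLp g 2 volume) :
    Summable (fun I => (ip g (haar I)) ^ 2) := by
  have h := orthonormal_haarLp.inner_products_summable (hg.toLp g)
  refine h.congr fun I => ?_
  rw [ip_eq_inner' hg I, real_inner_comm]
  rw [Real.norm_eq_abs, sq_abs]

lemma summable_haar_terms {g : ℝ → ℝ} (hg : MemLp g 2 volume) {σ : D → ℝ}
    (hσ : ∀ I, σ I = 1 ∨ σ I = -1) :
    Summable (fun I => (σ I * ip g (haar I)) • haarLp I) := by
  have hOF := orthonormal_haarLp.orthogonalFamily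
  have h := hOF.summable_iff_norm_sq_summable (fun I => σ I * ip g (haar I))
  simp only [LinearIsometry.toSpanSingleton_apply] at h
  rw [h]
  refine (summable_coeff_sq hg).congr fun I => ?_
  rcases hσ I with h1 | h1 <;> simp [h1, Real.norm_eq_abs, sq_abs, abs_mul]

lemma hasSum_Tfull {g : ℝ → ℝ} (hg : MemLp g 2 volume) {σ : D → ℝ}
    (hσ : ∀ I, σ I = 1 ∨ σ I = -1) :
    HasSum (fun I => (σ I * ip g (haar I)) • haarLp I) (Tfull σ g) :=
  (summable_haar_terms hg hσ).hasSum

lemma norm_partial_le {g : ℝ → ℝ} (hg : MemLp g 2 volume) {σ : D → ℝ}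
    (hσ : ∀ I, σ I = 1 ∨ σ I = -1) (s : Finset D) :
    ‖∑ I ∈ s, (σ I * ip g (haar I)) • haarLp I‖ ≤ ‖hg.toLp g‖ := by
  refine le_of_pow_le_pow_left₀ two_ne_zero (norm_nonneg _) ?_
  rw [norm_sum_haarLp]
  refine le_trans (le_of_eq ?_) (sum_coeff_sq_le hg s)
  refine Finset.sum_congr rfl fun I _ => ?_
  rcases hσ I with h1 | h1 <;> rw [h1] <;> ring

lemma norm_Tfull_le {g : ℝ → ℝ} (hg : MemLp g 2 volume) {σ : D → ℝ}
    (hσ : ∀ I, σ I = 1 ∨ σ I = -1) : ‖Tfull σ g‖ ≤ ‖hg.toLp g‖ := by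
  have h : Tendsto (fun s : Finset D => ‖∑ I ∈ s, (σ I * ip g (haar I)) • haarLp I‖)
      atTop (nhds ‖Tfull σ g‖) := (continuous_norm.tendsto _).comp (hasSum_Tfull hg hσ)
  exact le_of_tendsto h (Eventually.of_forall fun s => norm_partial_le hg hσ s)


/-! ### Finite Haar expansions -/

lemma finHaar_sm {b : ℝ → ℝ} {c : D →₀ ℝ} (hb : FinHaar b c) : StronglyMeasurable b := by
  rw [hb]
  refine Finset.stronglyMeasurable_fun_sum _ fun I _ => ?_
  exact (stronglyMeasurable_haar I).const_mul _

lemma finHaar_bound {b : ℝ → ℝ} {c : D →₀ ℝ} (hb : FinHaar b c) (x : ℝ) :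
    |b x| ≤ ∑ I ∈ c.support, |c I| * (Real.sqrt (len I))⁻¹ := by
  rw [hb]
  refine (Finset.abs_sum_le_sum_abs _ _).trans ?_
  refine Finset.sum_le_sum fun I _ => ?_
  rw [abs_mul]
  exact mul_le_mul_of_nonneg_left (haar_abs_le I x) (abs_nonneg _)

/-- The `L²`-norm bound for multiplication by a bounded function. -/
lemma norm_toLp_mul_le {bb : ℝ → ℝ} {K : ℝ} (hm : StronglyMeasurable bb)
    (hK : ∀ x, |bb x| ≤ K) {f : ℝ → ℝ} (hf : MemLp f 2 volume) :
    ‖(memℒp_bdd_mul hm hK hf).toLp (fun x => bb x * f x)‖ ≤ K * ‖hf.toLp f‖ := by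
  rw [Lp.norm_toLp, Lp.norm_toLp]
  have hK0 : 0 ≤ K := (abs_nonneg _).trans (hK 0)
  have h := eLpNorm_bdd_mul hK f
  have hG : eLpNorm f 2 volume = ENNReal.ofReal (eLpNorm f 2 volume).toReal :=
    (ENNReal.ofReal_toReal hf.2.ne).symm
  calc (eLpNorm (fun x => bb x * f x) 2 volume).toReal
      ≤ (ENNReal.ofReal K * ENNReal.ofReal (eLpNorm f 2 volume).toReal).toReal := by
        refine ENNReal.toReal_mono ?_ (hG ▸ h)
        exact ENNReal.mul_ne_top ENNReal.ofReal_ne_top ENNReal.ofReal_ne_top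
    _ = K * (eLpNorm f 2 volume).toReal := by
        rw [ENNReal.toReal_mul, ENNReal.toReal_ofReal hK0,
          ENNReal.toReal_ofReal ENNReal.toReal_nonneg]

/-- `l2normSq` of a bounded multiplier applied to an `L²` function. -/
lemma l2normSq_mul {bb : ℝ → ℝ} {K : ℝ} (hm : StronglyMeasurable bb) (hK : ∀ x, |bb x| ≤ K)
    (G : Lp ℝ 2 (volume : Measure ℝ)) :
    l2normSq (fun x => bb x * G x) = ‖mulCLM hm hK G‖ ^ 2 := by
  rw [← real_inner_self_eq_norm_sq, L2.inner_def, l2normSq]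
  refine integral_congr_ae ?_
  filter_upwards [coeFn_mulCLM hm hK G] with x h
  rw [RCLike.inner_apply, conj_trivial, h]
  ring

lemma integrable_of_ae_bound {μ : Measure (D → ℝ)} [IsProbabilityMeasure μ]
    {f : (D → ℝ) → ℝ} {C : ℝ} (hf : AEStronglyMeasurable f μ) (h : ∀ᵐ σ ∂μ, |f σ| ≤ C) :
    Integrable f μ :=
  memLp_one_iff_integrable.mp (MemLp.of_bound hf C (by filter_upwards [h] with σ hσ using
    (Real.norm_eq_abs _) ▸ hσ))

/-! ### Measurability in the random signs -/

/-- Partial sums of the Haar expansion of `T_σ g` along the enumeration `enum`. -/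
def pSum (g : ℝ → ℝ) (n : ℕ) (σ : D → ℝ) : Lp ℝ 2 (volume : Measure ℝ) :=
  ∑ i ∈ Finset.range n, (σ (enum i) * ip g (haar (enum i))) • haarLp (enum i)

lemma sm_term' (I : D) (l : ℝ) (v : Lp ℝ 2 (volume : Measure ℝ)) :
    StronglyMeasurable (fun σ : D → ℝ => (σ I * l) • v) := by
  haveI : SecondCountableTopologyEither ℝ (Lp ℝ 2 (volume : Measure ℝ)) :=
    secondCountableTopologyEither_of_left _ _
  have hc : Continuous (fun r : ℝ => (r * l) • v) :=
    (continuous_id.mul continuous_const).smul continuous_const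
  exact hc.stronglyMeasurable.comp_measurable (measurable_pi_apply I)

lemma sm_term (g : ℝ → ℝ) (I : D) :
    StronglyMeasurable (fun σ : D → ℝ => (σ I * ip g (haar I)) • haarLp I) :=
  sm_term' I _ _

lemma sm_sum_Lp (l : D → ℝ) (v : D → Lp ℝ 2 (volume : Measure ℝ)) (s : Finset D) :
    StronglyMeasurable (fun σ : D → ℝ => ∑ I ∈ s, (σ I * l I) • v I) := by
  classical
  induction s using Finset.induction_on with
  | empty => simpa using stronglyMeasurable_const
  | insert _ _ hx ih =>
      simp only [Finset.sum_insert hx]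
      exact StronglyMeasurable.add (sm_term' _ _ _) ih

lemma sm_pSum (g : ℝ → ℝ) (n : ℕ) : StronglyMeasurable (pSum g n) := by
  induction n with
  | zero =>
      have h0 : pSum g 0 = fun _ => 0 := by funext σ; simp [pSum]
      rw [h0]; exact stronglyMeasurable_const
  | succ n ih =>
      have : pSum g (n + 1) = fun σ =>
          pSum g n σ + (σ (enum n) * ip g (haar (enum n))) • haarLp (enum n) := by
        funext σ
        rw [pSum, pSum, Finset.sum_range_succ]
      rw [this]
      exact ih.add (sm_term g (enum n))

lemma norm_pSum_le {g : ℝ → ℝ} (hg : MemLp g 2 volume) {σ : D → ℝ}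
    (hσ : ∀ I, σ I = 1 ∨ σ I = -1) (n : ℕ) : ‖pSum g n σ‖ ≤ ‖hg.toLp g‖ := by
  have h : pSum g n σ = ∑ I ∈ (Finset.range n).image enum,
      (σ I * ip g (haar I)) • haarLp I := by
    rw [Finset.sum_image (fun a _ b _ h => enum.injective h)]
    rfl
  rw [h]
  exact norm_partial_le hg hσ _

lemma tendsto_pSum {g : ℝ → ℝ} (hg : MemLp g 2 volume) {σ : D → ℝ}
    (hσ : ∀ I, σ I = 1 ∨ σ I = -1) :
    Tendsto (fun n => pSum g n σ) atTop (nhds (Tfull σ g)) := by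
  have h := (enum.hasSum_iff
    (f := fun I => (σ I * ip g (haar I)) • haarLp I)).mpr (hasSum_Tfull hg hσ)
  exact h.tendsto_sum_nat

lemma aesm_Tfull {g : ℝ → ℝ} (hg : MemLp g 2 volume) {μ : Measure (D → ℝ)}
    (hμ : IsSignMeasure μ) : AEStronglyMeasurable (fun σ => Tfull σ g) μ := by
  refine aestronglyMeasurable_of_tendsto_ae atTop
    (fun n => (sm_pSum g n).aestronglyMeasurable) ?_
  filter_upwards [sign_ae hμ] with σ hσ
  exact tendsto_pSum hg hσ


/-! ### The two basic quantities -/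

lemma coeff_sub (β : ℝ → ℝ) {I J : D} (hsub : ival I ⊆ ival J) :
    ip (fun y => β y * haar1 J y) (haar I) = (Real.sqrt (len J))⁻¹ * ip β (haar I) := by
  rw [ip, ip, ← integral_const_mul]
  refine integral_congr_ae (Eventually.of_forall fun x => ?_)
  dsimp only
  by_cases hx : x ∈ ival I
  · rw [haar1, Set.indicator_of_mem (hsub hx)]
    ring
  · rw [haar_eq_zero hx]
    ring

lemma norm_w_sq {bb : ℝ → ℝ} {K : ℝ} (hm : StronglyMeasurable bb) (hK : ∀ x, |bb x| ≤ K)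
    (I : D) : ‖mulCLM hm hK (haarLp I)‖ ^ 2 = (len I)⁻¹ * ∫ x in ival I, (bb x) ^ 2 := by
  rw [← l2normSq_mul hm hK (haarLp I), l2normSq]
  have h1 : ∫ x, (bb x * (haarLp I : ℝ → ℝ) x) ^ 2 = ∫ x, (bb x * haar I x) ^ 2 := by
    refine integral_congr_ae ?_
    filter_upwards [(memℒp_haar I).coeFn_toLp] with x h
    rw [show ((haarLp I : ℝ → ℝ)) = ((memℒp_haar I).toLp (haar I) : ℝ → ℝ) from rfl] at *
    rw [h]
  rw [h1]
  have h2 : ∀ x, (bb x * haar I x) ^ 2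
      = (len I)⁻¹ * (ival I).indicator (fun y => (bb y) ^ 2) x := by
    intro x
    have := haar_sq I x
    by_cases hx : x ∈ ival I
    · rw [Set.indicator_of_mem hx] at this ⊢
      nlinarith [this]
    · rw [Set.indicator_of_notMem hx] at this ⊢
      rw [haar_eq_zero hx]
      ring
  simp only [h2]
  rw [integral_const_mul, integral_indicator (measurableSet_ival I)]

set_option maxHeartbeats 2000000 in
/-- **Key estimate.** Testing on `h¹_J` bounds the local Carleson quantity. -/
lemma key {b β : ℝ → ℝ} {cb cβ : D →₀ ℝ} (hb : FinHaar b cb) (hβ : FinHaar β cβ)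
    {μ : Measure (D → ℝ)} (hμ : IsSignMeasure μ) (J : D) :
    (len J)⁻¹ * ∑ I ∈ cβ.support.filter (fun I => ival I ⊆ ival J),
        (ip β (haar I)) ^ 2 / len I * ∫ x in ival I, (b x) ^ 2 ≤
      ∫ σ, l2normSq (MbTM σ b β (haar1 J)) ∂μ := by
  haveI := hμ.1
  have hbm := finHaar_sm hb
  have hbK := finHaar_bound hb
  set Kb := ∑ I ∈ cb.support, |cb I| * (Real.sqrt (len I))⁻¹ with hKbdef
  have hKb0 : 0 ≤ Kb := (abs_nonneg _).trans (hbK 0)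
  set Mb := mulCLM hbm hbK with hMbdef
  set g : ℝ → ℝ := fun y => β y * haar1 J y with hgdef
  have hgm : MemLp g 2 volume :=
    memℒp_bdd_mul (finHaar_sm hβ) (finHaar_bound hβ) (memℒp_haar1 J)
  set gL := hgm.toLp g with hgL
  set S := cβ.support.filter (fun I => ival I ⊆ ival J) with hSdef
  set c : D → ℝ := fun I => ip g (haar I) with hcdef
  set w : D → Lp ℝ 2 (volume : Measure ℝ) := fun I => Mb (haarLp I) with hwdef
  set F : (D → ℝ) → Lp ℝ 2 (volume : Measure ℝ) := fun σ => Tfull σ g with hFdef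
  set A : (D → ℝ) → Lp ℝ 2 (volume : Measure ℝ) :=
    fun σ => ∑ I ∈ S, (σ I * c I) • w I with hAdef
  -- the left-hand side equals `∑ I ∈ S, (c I)² ⬝ ‖w I‖²`
  have hLHS : (len J)⁻¹ * ∑ I ∈ S,
      (ip β (haar I)) ^ 2 / len I * ∫ x in ival I, (b x) ^ 2
      = ∑ I ∈ S, (c I) ^ 2 * ‖w I‖ ^ 2 := by
    rw [Finset.mul_sum]
    refine Finset.sum_congr rfl fun I hI => ?_
    have hsub : ival I ⊆ ival J := (Finset.mem_filter.mp hI).2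
    have hcI : c I = (Real.sqrt (len J))⁻¹ * ip β (haar I) := coeff_sub β hsub
    have hwI : ‖w I‖ ^ 2 = (len I)⁻¹ * ∫ x in ival I, (b x) ^ 2 := norm_w_sq hbm hbK I
    rw [hcI, hwI, mul_pow, ← Real.sqrt_inv, Real.sq_sqrt (inv_nonneg.mpr (len_pos J).le)]
    rw [div_eq_mul_inv]
    ring
  rw [hLHS]
  -- each σ: `l2normSq (M_b T_σ M_β h¹_J) = ‖M_b (F σ)‖²`
  have hval : ∀ σ, l2normSq (MbTM σ b β (haar1 J)) = ‖Mb (F σ)‖ ^ 2 := fun σ =>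
    l2normSq_mul hbm hbK (Tfull σ g)
  simp only [hval]
  -- integrability and bounds
  have hFsm : AEStronglyMeasurable F μ := aesm_Tfull hgm hμ
  have hAsm : AEStronglyMeasurable A μ := (sm_sum_Lp c w S).aestronglyMeasurable
  have hFb : ∀ᵐ σ ∂μ, ‖F σ‖ ≤ ‖gL‖ := by
    filter_upwards [sign_ae hμ] with σ hσ using norm_Tfull_le hgm hσ
  set CA : ℝ := ∑ I ∈ S, |c I| * ‖w I‖ with hCA
  have hAb : ∀ᵐ σ ∂μ, ‖A σ‖ ≤ CA := by
    filter_upwards [sign_ae hμ] with σ hσ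
    refine (norm_sum_le _ _).trans ?_
    refine Finset.sum_le_sum fun I _ => ?_
    rw [norm_smul, Real.norm_eq_abs, abs_mul]
    rcases hσ I with h1 | h1 <;> simp [h1]
  -- the three integrands
  have hi1 : Integrable (fun σ => ‖Mb (F σ)‖ ^ 2) μ := by
    refine integrable_of_ae_bound (C := (Kb * ‖gL‖) ^ 2)
      (((continuous_norm.comp Mb.continuous).pow 2).comp_aestronglyMeasurable hFsm) ?_
    filter_upwards [hFb] with σ h
    rw [abs_of_nonneg (by positivity)]
    have h2 : ‖Mb (F σ)‖ ≤ Kb * ‖gL‖ :=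
      (norm_mulCLM_le hbm hbK (F σ)).trans (by nlinarith [norm_nonneg (F σ)])
    nlinarith [norm_nonneg (Mb (F σ))]
  have hCA0 : 0 ≤ CA := Finset.sum_nonneg fun I _ => by positivity
  have hi2 : Integrable (fun σ => (inner ℝ (A σ) (Mb (F σ)) : ℝ)) μ := by
    refine integrable_of_ae_bound (C := CA * (Kb * ‖gL‖)) ?_ ?_
    · exact hAsm.inner (Mb.continuous.comp_aestronglyMeasurable hFsm)
    · filter_upwards [hFb, hAb] with σ h1 h2
      refine (abs_real_inner_le_norm _ _).trans ?_
      have h3 : ‖Mb (F σ)‖ ≤ Kb * ‖gL‖ :=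
        (norm_mulCLM_le hbm hbK (F σ)).trans (by nlinarith [norm_nonneg (F σ)])
      exact mul_le_mul h2 h3 (norm_nonneg _) hCA0
  have hi3 : Integrable (fun σ => ‖A σ‖ ^ 2) μ := by
    refine integrable_of_ae_bound (C := CA ^ 2)
      ((continuous_norm.pow 2).comp_aestronglyMeasurable hAsm) ?_
    filter_upwards [hAb] with σ h
    rw [abs_of_nonneg (by positivity)]
    nlinarith [norm_nonneg (A σ)]
  -- the expectation of `‖A σ‖²`
  have hEA : ∫ σ, ‖A σ‖ ^ 2 ∂μ = ∑ I ∈ S, (c I) ^ 2 * ‖w I‖ ^ 2 := by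
    have hexp : ∀ σ, ‖A σ‖ ^ 2 = ∑ I ∈ S, ∑ K ∈ S,
        (σ I * σ K) * ((c I * c K) * (inner ℝ (w I) (w K) : ℝ)) := by
      intro σ
      rw [← real_inner_self_eq_norm_sq]
      show (inner ℝ (∑ I ∈ S, (σ I * c I) • w I) (∑ K ∈ S, (σ K * c K) • w K) : ℝ) = _
      rw [sum_inner]
      refine Finset.sum_congr rfl fun I _ => ?_
      rw [inner_sum]
      refine Finset.sum_congr rfl fun K _ => ?_
      rw [real_inner_smul_left, real_inner_smul_right]
      ring
    simp only [hexp]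
    rw [integral_finset_sum _ (fun I _ => integrable_finset_sum _
      (fun K _ => (integrable_eval_mul hμ I K).mul_const _))]
    refine Finset.sum_congr rfl fun I hI => ?_
    rw [integral_finset_sum _ (fun K _ => (integrable_eval_mul hμ I K).mul_const _)]
    have : ∀ K ∈ S, ∫ σ, (σ I * σ K) * ((c I * c K) * (inner ℝ (w I) (w K) : ℝ)) ∂μ
        = (if I = K then 1 else 0) * ((c I * c K) * (inner ℝ (w I) (w K) : ℝ)) := by
      intro K _
      rw [integral_mul_const, integral_eval_mul hμ I K]
    rw [Finset.sum_congr rfl this]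
    simp only [ite_mul, one_mul, zero_mul]
    rw [Finset.sum_ite_eq S I (fun K => (c I * c K) * (inner ℝ (w I) (w K) : ℝ)), if_pos hI,
      real_inner_self_eq_norm_sq]
    ring
  -- the expectation of each cross term
  have hper : ∀ I ∈ S, ∫ σ, (σ I * c I) * (inner ℝ (w I) (Mb (F σ)) : ℝ) ∂μ
      = (c I) ^ 2 * ‖w I‖ ^ 2 := by
    intro I hI
    set q : ℕ → (D → ℝ) → ℝ :=
      fun n σ => (σ I * c I) * (inner ℝ (w I) (Mb (pSum g n σ)) : ℝ) with hq
    have hqe : ∀ n σ, q n σ = ∑ i ∈ Finset.range n,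
        (σ I * σ (enum i)) * ((c I * c (enum i)) * (inner ℝ (w I) (w (enum i)) : ℝ)) := by
      intro n σ
      rw [hq]
      show (σ I * c I) * (inner ℝ (w I) (Mb (pSum g n σ)) : ℝ) = _
      rw [pSum, map_sum]
      rw [inner_sum]
      rw [Finset.mul_sum]
      refine Finset.sum_congr rfl fun i _ => ?_
      rw [_root_.map_smul, real_inner_smul_right]
      ring
    have hqval : ∀ n, ∫ σ, q n σ ∂μ = ∑ i ∈ Finset.range n,
        (if I = enum i then 1 else 0) *
          ((c I * c (enum i)) * (inner ℝ (w I) (w (enum i)) : ℝ)) := by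
      intro n
      simp only [hqe]
      rw [integral_finset_sum _ (fun i _ => (integrable_eval_mul hμ I (enum i)).mul_const _)]
      refine Finset.sum_congr rfl fun i _ => ?_
      rw [integral_mul_const, integral_eval_mul hμ I (enum i)]
    have hqev : ∀ n, (enum.symm I : ℕ) < n → ∫ σ, q n σ ∂μ = (c I) ^ 2 * ‖w I‖ ^ 2 := by
      intro n hn
      rw [hqval n]
      have hrw : ∀ i, (if I = enum i then (1:ℝ) else 0) = (if i = (enum.symm I : ℕ) then 1 else 0) := by
        intro i
        by_cases h : I = enum i
        · rw [if_pos h, if_pos (by rw [h]; simp)]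
        · rw [if_neg h, if_neg (fun hc => h (by rw [hc]; simp))]
      simp only [hrw, ite_mul, one_mul, zero_mul]
      rw [Finset.sum_ite_eq' (Finset.range n) (enum.symm I)
        (fun i => (c I * c (enum i)) * (inner ℝ (w I) (w (enum i)) : ℝ)),
        if_pos (Finset.mem_range.mpr hn)]
      simp only [Equiv.apply_symm_apply]
      rw [real_inner_self_eq_norm_sq]
      ring
    have htint : Tendsto (fun n => ∫ σ, q n σ ∂μ) atTop
        (nhds ((c I) ^ 2 * ‖w I‖ ^ 2)) := by
      refine Tendsto.congr' ?_ tendsto_const_nhds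
      filter_upwards [eventually_gt_atTop (enum.symm I : ℕ)] with n hn
      exact (hqev n hn).symm
    have hdct : Tendsto (fun n => ∫ σ, q n σ ∂μ) atTop
        (nhds (∫ σ, (σ I * c I) * (inner ℝ (w I) (Mb (F σ)) : ℝ) ∂μ)) := by
      refine tendsto_integral_filter_of_dominated_convergence
        (bound := fun _ => |c I| * (‖w I‖ * (Kb * ‖gL‖))) ?_ ?_ ?_ ?_
      · refine Eventually.of_forall fun n => ?_
        refine AEStronglyMeasurable.mul ?_ ?_
        · exact ((measurable_pi_apply I : Measurable fun σ : D → ℝ => σ I).mul_const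
            (c I)).aestronglyMeasurable
        · exact (continuous_const.inner Mb.continuous).comp_aestronglyMeasurable
            (sm_pSum g n).aestronglyMeasurable
      · refine Eventually.of_forall fun n => ?_
        filter_upwards [sign_ae hμ] with σ hσ
        rw [Real.norm_eq_abs, abs_mul, abs_mul]
        have h1 : |σ I| = 1 := by rcases hσ I with h | h <;> simp [h]
        rw [h1, one_mul]
        refine mul_le_mul_of_nonneg_left ?_ (abs_nonneg _)
        refine (abs_real_inner_le_norm _ _).trans ?_
        refine mul_le_mul_of_nonneg_left ?_ (norm_nonneg _)
        refine (norm_mulCLM_le hbm hbK _).trans ?_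
        exact mul_le_mul_of_nonneg_left (norm_pSum_le hgm hσ n) hKb0
      · exact integrable_const _
      · filter_upwards [sign_ae hμ] with σ hσ
        have h1 := tendsto_pSum hgm hσ
        have h2 : Continuous (fun G : Lp ℝ 2 (volume : Measure ℝ) =>
            (σ I * c I) * (inner ℝ (w I) (Mb G) : ℝ)) :=
          continuous_const.mul (continuous_const.inner Mb.continuous)
        exact (h2.tendsto _).comp h1
    exact tendsto_nhds_unique hdct htint
  -- the expectation of the cross term
  have hEcross : ∫ σ, (inner ℝ (A σ) (Mb (F σ)) : ℝ) ∂μ = ∑ I ∈ S, (c I) ^ 2 * ‖w I‖ ^ 2 := by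
    have hexp : ∀ σ, (inner ℝ (A σ) (Mb (F σ)) : ℝ)
        = ∑ I ∈ S, (σ I * c I) * (inner ℝ (w I) (Mb (F σ)) : ℝ) := by
      intro σ
      show (inner ℝ (∑ I ∈ S, (σ I * c I) • w I) (Mb (F σ)) : ℝ) = _
      rw [sum_inner]
      refine Finset.sum_congr rfl fun I _ => ?_
      rw [real_inner_smul_left]
    simp only [hexp]
    rw [integral_finset_sum _ ?_]
    · exact Finset.sum_congr rfl hper
    · intro I _
      refine integrable_of_ae_bound (C := |c I| * (‖w I‖ * (Kb * ‖gL‖))) ?_ ?_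
      · exact AEStronglyMeasurable.mul
          ((measurable_pi_apply I : Measurable fun σ : D → ℝ => σ I).mul_const
            (c I)).aestronglyMeasurable
          ((continuous_const.inner Mb.continuous).comp_aestronglyMeasurable hFsm)
      · filter_upwards [sign_ae hμ, hFb] with σ hσ hFσ
        rw [abs_mul, abs_mul]
        have h1 : |σ I| = 1 := by rcases hσ I with h | h <;> simp [h]
        rw [h1, one_mul]
        refine mul_le_mul_of_nonneg_left ?_ (abs_nonneg _)
        refine (abs_real_inner_le_norm _ _).trans ?_
        refine mul_le_mul_of_nonneg_left ?_ (norm_nonneg _)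
        refine (norm_mulCLM_le hbm hbK _).trans ?_
        exact mul_le_mul_of_nonneg_left hFσ hKb0
  -- conclusion
  have hptwise : ∀ σ, 2 * (inner ℝ (A σ) (Mb (F σ)) : ℝ) - ‖A σ‖ ^ 2 ≤ ‖Mb (F σ)‖ ^ 2 := by
    intro σ
    have h := norm_sub_sq_real (Mb (F σ)) (A σ)
    have h2 : (0:ℝ) ≤ ‖Mb (F σ) - A σ‖ ^ 2 := sq_nonneg _
    rw [real_inner_comm]
    nlinarith [h, h2]
  have hmono : ∫ σ, (2 * (inner ℝ (A σ) (Mb (F σ)) : ℝ) - ‖A σ‖ ^ 2) ∂μ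
      ≤ ∫ σ, ‖Mb (F σ)‖ ^ 2 ∂μ :=
    integral_mono_ae ((hi2.const_mul 2).sub hi3) hi1 (Eventually.of_forall hptwise)
  have hsum : ∫ σ, (2 * (inner ℝ (A σ) (Mb (F σ)) : ℝ) - ‖A σ‖ ^ 2) ∂μ
      = 2 * (∫ σ, (inner ℝ (A σ) (Mb (F σ)) : ℝ) ∂μ) - ∫ σ, ‖A σ‖ ^ 2 ∂μ := by
    rw [integral_sub (hi2.const_mul 2) hi3, integral_const_mul]
  rw [hsum, hEcross, hEA] at hmono
  linarith

/-- Uniform bound for the averaged operator applied to unit vectors. -/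
lemma avg_bound {b β : ℝ → ℝ} {cb cβ : D →₀ ℝ} (hb : FinHaar b cb) (hβ : FinHaar β cβ)
    {μ : Measure (D → ℝ)} (hμ : IsSignMeasure μ) {f : ℝ → ℝ} (hf : UnitL2 f) :
    ∫ σ, l2normSq (MbTM σ b β f) ∂μ ≤
      ((∑ I ∈ cb.support, |cb I| * (Real.sqrt (len I))⁻¹) *
        (∑ I ∈ cβ.support, |cβ I| * (Real.sqrt (len I))⁻¹)) ^ 2 := by
  haveI := hμ.1
  have hbm := finHaar_sm hb
  have hbK := finHaar_bound hb
  set Kb := ∑ I ∈ cb.support, |cb I| * (Real.sqrt (len I))⁻¹ with hKbdef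
  set Kβ := ∑ I ∈ cβ.support, |cβ I| * (Real.sqrt (len I))⁻¹ with hKβdef
  have hKb0 : 0 ≤ Kb := (abs_nonneg _).trans (hbK 0)
  have hKβ0 : 0 ≤ Kβ := (abs_nonneg _).trans (finHaar_bound hβ 0)
  set g : ℝ → ℝ := fun y => β y * f y with hgdef
  have hgm : MemLp g 2 volume := memℒp_bdd_mul (finHaar_sm hβ) (finHaar_bound hβ) hf.1
  have hval : ∀ σ, l2normSq (MbTM σ b β f) = ‖mulCLM hbm hbK (Tfull σ g)‖ ^ 2 := fun σ =>
    l2normSq_mul hbm hbK (Tfull σ g)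
  have hnf : ‖hf.1.toLp f‖ = 1 := by
    rw [Lp.norm_toLp, hf.2]
    simp
  have hgLb : ‖hgm.toLp g‖ ≤ Kβ := by
    refine (norm_toLp_mul_le (finHaar_sm hβ) (finHaar_bound hβ) hf.1).trans ?_
    rw [hnf, mul_one]
  have hae : ∀ᵐ σ ∂μ, l2normSq (MbTM σ b β f) ≤ (Kb * Kβ) ^ 2 := by
    filter_upwards [sign_ae hμ] with σ hσ
    rw [hval σ]
    have h1 : ‖mulCLM hbm hbK (Tfull σ g)‖ ≤ Kb * Kβ := by
      refine (norm_mulCLM_le hbm hbK _).trans ?_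
      refine mul_le_mul_of_nonneg_left ?_ hKb0
      exact (norm_Tfull_le hgm hσ).trans hgLb
    nlinarith [norm_nonneg (mulCLM hbm hbK (Tfull σ g))]
  by_cases hInt : Integrable (fun σ => l2normSq (MbTM σ b β f)) μ
  · refine le_trans (integral_mono_ae hInt (integrable_const _) hae) ?_
    rw [integral_const]
    simp
  · rw [integral_undef hInt]
    positivity

/-- Testing `M_b T_σ M_β` on the functions `h¹_J` bounds the Carleson-type
expression `sup_J |J|⁻¹ ∑_{I ⊆ J} (⟨β,h_I⟩²/|I|) ∫_I b²` by the averaged operator norm. -/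
theorem statement19 (b β : ℝ → ℝ) (cb cβ : D →₀ ℝ) (hb : FinHaar b cb) (hβ : FinHaar β cβ)
    (μ : Measure (D → ℝ)) (hμ : IsSignMeasure μ) :
    (∀ J : D,
      (len J)⁻¹ * ∑ I ∈ cβ.support.filter (fun I => ival I ⊆ ival J),
          (ip β (haar I)) ^ 2 / len I * ∫ x in ival I, (b x) ^ 2 ≤
        ∫ σ, l2normSq (MbTM σ b β (haar1 J)) ∂μ) ∧
    (⨆ J : D, (len J)⁻¹ * ∑ I ∈ cβ.support.filter (fun I => ival I ⊆ ival J),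
        (ip β (haar I)) ^ 2 / len I * ∫ x in ival I, (b x) ^ 2) ≤
      (avgOpNorm μ (fun σ f => MbTM σ b β f)) ^ 2 := by
  refine ⟨fun J => key hb hβ hμ J, ?_⟩
  have hBdd : BddAbove (Set.range fun f : {f : ℝ → ℝ // UnitL2 f} =>
      Real.sqrt (∫ σ, l2normSq (MbTM σ b β f.1) ∂μ)) := by
    refine ⟨|(∑ I ∈ cb.support, |cb I| * (Real.sqrt (len I))⁻¹) *
      (∑ I ∈ cβ.support, |cβ I| * (Real.sqrt (len I))⁻¹)|, ?_⟩
    rintro x ⟨f, rfl⟩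
    refine le_trans (Real.sqrt_le_sqrt (avg_bound hb hβ hμ f.2)) ?_
    rw [Real.sqrt_sq_eq_abs]
  refine ciSup_le fun J => ?_
  have h1 := key hb hβ hμ J
  have h3 : 0 ≤ ∫ σ, l2normSq (MbTM σ b β (haar1 J)) ∂μ := by
    refine integral_nonneg fun σ => ?_
    exact integral_nonneg fun x => sq_nonneg _
  have h2 : Real.sqrt (∫ σ, l2normSq (MbTM σ b β (haar1 J)) ∂μ)
      ≤ avgOpNorm μ (fun σ f => MbTM σ b β f) :=
    le_ciSup hBdd (⟨haar1 J, unitL2_haar1 J⟩ : {f : ℝ → ℝ // UnitL2 f})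
  calc (len J)⁻¹ * ∑ I ∈ cβ.support.filter (fun I => ival I ⊆ ival J),
      (ip β (haar I)) ^ 2 / len I * ∫ x in ival I, (b x) ^ 2
      ≤ ∫ σ, l2normSq (MbTM σ b β (haar1 J)) ∂μ := h1
    _ = (Real.sqrt (∫ σ, l2normSq (MbTM σ b β (haar1 J)) ∂μ)) ^ 2 := (Real.sq_sqrt h3).symm
    _ ≤ (avgOpNorm μ (fun σ f => MbTM σ b β f)) ^ 2 :=
        pow_le_pow_left₀ (Real.sqrt_nonneg _) h2 2

end RandomParaproducts
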